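/- Let C be a category with finite coproducts in which every coproduct inclusion satisfies (E2). Then coproducts in C are disjoint, and every coproduct inclusion in C is a regular monomorphism (indeed, an equaliser of a pair of morphisms). -/

import Mathlib

open CategoryTheory CategoryTheory.Limits

universe v u

variable {C : Type u} [Category.{v} C]

/-- `i₁ : X₁ ⟶ X` and `i₂ : X₂ ⟶ X` form a binary coproduct diagram. -/
def IsCoprodDiagram {X₁ X₂ X : C} (i₁ : X₁ ⟶ X) (i₂ : X₂ ⟶ X) : Prop :=
  Nonempty (IsColimit (BinaryCofan.mk i₁ i₂))

/-- `p₁ : X ⟶ X₁` and `p₂ : X ⟶ X₂` form a binary product diagram. -/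
def IsProdDiagram {X X₁ X₂ : C} (p₁ : X ⟶ X₁) (p₂ : X ⟶ X₂) : Prop :=
  Nonempty (IsLimit (BinaryFan.mk p₁ p₂))

/-- Condition (E1): pullbacks of `f` along both inclusions of any binary coproduct diagram
exist and the resulting legs form a binary coproduct diagram. -/
def SatE1 {A X : C} (f : A ⟶ X) : Prop :=
  ∀ {X₁ X₂ : C} (x₁ : X₁ ⟶ X) (x₂ : X₂ ⟶ X), IsCoprodDiagram x₁ x₂ →
    ∃ (A₁ A₂ : C) (a₁ : A₁ ⟶ A) (a₂ : A₂ ⟶ A) (f₁ : A₁ ⟶ X₁) (f₂ : A₂ ⟶ X₂),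
      IsPullback a₁ f₁ f x₁ ∧ IsPullback a₂ f₂ f x₂ ∧ IsCoprodDiagram a₁ a₂

/-- Condition (E2): in any commutative diagram over `f` whose rows are binary coproduct
diagrams, both squares are pullbacks. -/
def SatE2 {A X : C} (f : A ⟶ X) : Prop :=
  ∀ {A₁ A₂ X₁ X₂ : C} (a₁ : A₁ ⟶ A) (a₂ : A₂ ⟶ A) (x₁ : X₁ ⟶ X) (x₂ : X₂ ⟶ X)
    (f₁ : A₁ ⟶ X₁) (f₂ : A₂ ⟶ X₂),
    a₁ ≫ f = f₁ ≫ x₁ → a₂ ≫ f = f₂ ≫ x₂ →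
    IsCoprodDiagram x₁ x₂ → IsCoprodDiagram a₁ a₂ →
    IsPullback a₁ f₁ f x₁ ∧ IsPullback a₂ f₂ f x₂

/-- A morphism is extensive if it satisfies (E1) and (E2). -/
def Extensive {A X : C} (f : A ⟶ X) : Prop := SatE1 f ∧ SatE2 f

/-- Condition (C1): pushouts of `f` along both projections of any binary product diagram
exist and the resulting legs form a binary product diagram. -/
def SatC1 {A X : C} (f : A ⟶ X) : Prop :=
  ∀ {A₁ A₂ : C} (p₁ : A ⟶ A₁) (p₂ : A ⟶ A₂), IsProdDiagram p₁ p₂ →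
    ∃ (X₁ X₂ : C) (q₁ : X ⟶ X₁) (q₂ : X ⟶ X₂) (f₁ : A₁ ⟶ X₁) (f₂ : A₂ ⟶ X₂),
      IsPushout p₁ f f₁ q₁ ∧ IsPushout p₂ f f₂ q₂ ∧ IsProdDiagram q₁ q₂

/-- Condition (C2): in any commutative diagram over `f` whose rows are binary product
diagrams, both squares are pushouts. -/
def SatC2 {A X : C} (f : A ⟶ X) : Prop :=
  ∀ {A₁ A₂ X₁ X₂ : C} (p₁ : A ⟶ A₁) (p₂ : A ⟶ A₂) (q₁ : X ⟶ X₁) (q₂ : X ⟶ X₂)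
    (f₁ : A₁ ⟶ X₁) (f₂ : A₂ ⟶ X₂),
    p₁ ≫ f₁ = f ≫ q₁ → p₂ ≫ f₂ = f ≫ q₂ →
    IsProdDiagram p₁ p₂ → IsProdDiagram q₁ q₂ →
    IsPushout p₁ f f₁ q₁ ∧ IsPushout p₂ f f₂ q₂

/-- A morphism is coextensive if it satisfies (C1) and (C2). -/
def Coextensive {A X : C} (f : A ⟶ X) : Prop := SatC1 f ∧ SatC2 f

/-- A coproduct inclusion: a morphism admitting a complementary inclusion forming
a binary coproduct diagram. -/
def IsCoprodInclusion {A X : C} (ι : A ⟶ X) : Prop :=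
  ∃ (A' : C) (ι' : A' ⟶ X), IsCoprodDiagram ι ι'

/-- An extremal epimorphism: whenever `e = i ≫ m` with `m` a monomorphism, `m` is an
isomorphism. -/
def IsExtremalEpi {A B : C} (e : A ⟶ B) : Prop :=
  ∀ {I : C} (i : A ⟶ I) (m : I ⟶ B), Mono m → i ≫ m = e → IsIso m

/-- The binary strict refinement property for an object `X`. -/
def BinaryStrictRefinement (X : C) : Prop :=
  ∀ {A₁ A₂ B₁ B₂ : C} (a₁ : X ⟶ A₁) (a₂ : X ⟶ A₂) (b₁ : X ⟶ B₁) (b₂ : X ⟶ B₂),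
    IsProdDiagram a₁ a₂ → IsProdDiagram b₁ b₂ →
    ∃ (C₁₁ C₁₂ C₂₁ C₂₂ : C)
      (α₁₁ : A₁ ⟶ C₁₁) (α₁₂ : A₁ ⟶ C₁₂) (α₂₁ : A₂ ⟶ C₂₁) (α₂₂ : A₂ ⟶ C₂₂)
      (β₁₁ : B₁ ⟶ C₁₁) (β₁₂ : B₂ ⟶ C₁₂) (β₂₁ : B₁ ⟶ C₂₁) (β₂₂ : B₂ ⟶ C₂₂),
      a₁ ≫ α₁₁ = b₁ ≫ β₁₁ ∧ a₁ ≫ α₁₂ = b₂ ≫ β₁₂ ∧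
      a₂ ≫ α₂₁ = b₁ ≫ β₂₁ ∧ a₂ ≫ α₂₂ = b₂ ≫ β₂₂ ∧
      IsProdDiagram α₁₁ α₁₂ ∧ IsProdDiagram α₂₁ α₂₂ ∧
      IsProdDiagram β₁₁ β₂₁ ∧ IsProdDiagram β₁₂ β₂₂

/-- A jointly monomorphic pair which is a reflexive, symmetric and transitive relation. -/
def IsEquivalenceRelationPair {R X : C} (r₁ r₂ : R ⟶ X) : Prop :=
  (∀ {T : C} (a b : T ⟶ R), a ≫ r₁ = b ≫ r₁ → a ≫ r₂ = b ≫ r₂ → a = b) ∧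
  (∃ d : X ⟶ R, d ≫ r₁ = 𝟙 X ∧ d ≫ r₂ = 𝟙 X) ∧
  (∃ s : R ⟶ R, s ≫ r₁ = r₂ ∧ s ≫ r₂ = r₁) ∧
  (∀ {P : C} (p₁ p₂ : P ⟶ R), IsPullback p₁ p₂ r₂ r₁ →
    ∃ t : P ⟶ R, t ≫ r₁ = p₁ ≫ r₁ ∧ t ≫ r₂ = p₂ ≫ r₂)


private lemma mono_and_disjoint_aux [HasFiniteCoproducts C]
    (h : ∀ {A X : C} (ι : A ⟶ X), IsCoprodInclusion ι → SatE2 ι)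
    {X₁ X₂ X : C} (ι₁ : X₁ ⟶ X) (ι₂ : X₂ ⟶ X) (hc : IsCoprodDiagram ι₁ ι₂) :
    Mono ι₁ ∧ IsPullback (initial.to X₁) (initial.to X₂) ι₁ ι₂ := by
  have hinc : IsCoprodInclusion ι₁ := ⟨X₂, ι₂, hc⟩
  have htop : IsCoprodDiagram (𝟙 X₁) (initial.to X₁) :=
    ⟨BinaryCofan.isColimitMk (fun s => s.inl) (fun s => Category.id_comp _)
      (fun s => initialIsInitial.hom_ext _ _) (fun s m h₁ _ => by simpa using h₁)⟩
  obtain ⟨pb1, pb2⟩ := h ι₁ hinc (𝟙 X₁) (initial.to X₁) ι₁ ι₂ (𝟙 X₁) (initial.to X₂)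
    (by simp) (initialIsInitial.hom_ext _ _) hc htop
  refine ⟨⟨fun u v huv => ?_⟩, pb2⟩
  have h1 := pb1.lift_fst u v (by simpa using huv)
  have h2 := pb1.lift_snd u v (by simpa using huv)
  simp only [Category.comp_id] at h1 h2
  exact h1.symm.trans h2

/-- If every coproduct inclusion satisfies (E2), then coproducts are disjoint and every
coproduct inclusion is a regular monomorphism. -/
theorem disjoint_and_regularMono_of_inclusions_satE2 [HasFiniteCoproducts C]
    (h : ∀ {A X : C} (ι : A ⟶ X), IsCoprodInclusion ι → SatE2 ι) :
    (∀ {X₁ X₂ X : C} (ι₁ : X₁ ⟶ X) (ι₂ : X₂ ⟶ X), IsCoprodDiagram ι₁ ι₂ →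
      Mono ι₁ ∧ Mono ι₂ ∧
      ∃ (P : C) (p₁ : P ⟶ X₁) (p₂ : P ⟶ X₂),
        IsPullback p₁ p₂ ι₁ ι₂ ∧ Nonempty (IsInitial P)) ∧
    (∀ {A X : C} (ι : A ⟶ X), IsCoprodInclusion ι → Nonempty (RegularMono ι)) := by
  constructor
  · intro X₁ X₂ X ι₁ ι₂ hc
    obtain ⟨m1, pb⟩ := mono_and_disjoint_aux h ι₁ ι₂ hc
    have hc' : IsCoprodDiagram ι₂ ι₁ := ⟨BinaryCofan.isColimitFlip hc.some⟩
    obtain ⟨m2, -⟩ := mono_and_disjoint_aux h ι₂ ι₁ hc'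
    exact ⟨m1, m2, ⊥_ C, _, _, pb, ⟨initialIsInitial⟩⟩
  · intro A X ι hinc
    obtain ⟨A', ι', hc⟩ := hinc
    obtain ⟨mono_ι, -⟩ := mono_and_disjoint_aux h ι ι' hc
    obtain ⟨c⟩ := hc
    set t : X ⟶ X ⨿ A' := c.desc (BinaryCofan.mk (ι ≫ coprod.inl) coprod.inr) with htdef
    have ht1 : ι ≫ t = ι ≫ coprod.inl := c.fac _ ⟨WalkingPair.left⟩
    have ht2 : ι' ≫ t = coprod.inr := c.fac _ ⟨WalkingPair.right⟩
    -- `t` is a coproduct inclusion with complement `ι' ≫ coprod.inl`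
    have htinc : IsCoprodInclusion t := by
      refine ⟨A', ι' ≫ coprod.inl, ⟨BinaryCofan.isColimitMk
        (fun s => coprod.desc (c.desc (BinaryCofan.mk (ι ≫ s.inl) s.inr)) (ι' ≫ s.inl))
        (fun s => ?_) (fun s => ?_) (fun s m hm1 hm2 => ?_)⟩⟩
      · apply BinaryCofan.IsColimit.hom_ext c
        · show ι ≫ t ≫ _ = ι ≫ s.inl
          rw [← Category.assoc, ht1, Category.assoc]
          erw [coprod.inl_desc]
          exact c.fac _ ⟨WalkingPair.left⟩
        · show ι' ≫ t ≫ _ = ι' ≫ s.inl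
          rw [← Category.assoc, ht2]
          erw [coprod.inr_desc]
      · show (ι' ≫ coprod.inl) ≫ _ = s.inr
        rw [Category.assoc]
        erw [coprod.inl_desc]
        exact c.fac _ ⟨WalkingPair.right⟩
      · apply coprod.hom_ext
        · erw [coprod.inl_desc]
          apply BinaryCofan.IsColimit.hom_ext c
          · show ι ≫ coprod.inl ≫ m = ι ≫ _
            rw [← Category.assoc, ← ht1, Category.assoc, hm1]
            exact (c.fac (BinaryCofan.mk (ι ≫ s.inl) s.inr) ⟨WalkingPair.left⟩).symm
          · show ι' ≫ coprod.inl ≫ m = ι' ≫ _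
            rw [← Category.assoc]
            exact hm2.trans (c.fac (BinaryCofan.mk (ι ≫ s.inl) s.inr) ⟨WalkingPair.right⟩).symm
        · erw [coprod.inr_desc]
          rw [← ht2, Category.assoc, hm1]
    obtain ⟨pb, -⟩ := h t htinc ι ι' coprod.inl coprod.inr ι (𝟙 A')
      ht1 (by rw [ht2, Category.id_comp]) ⟨coprodIsCoprod X A'⟩ ⟨c⟩
    refine ⟨⟨X ⨿ A', t, coprod.inl, ht1, ?_⟩⟩
    refine Fork.IsLimit.mk _ (fun s => pb.lift s.ι s.ι s.condition)
      (fun s => pb.lift_fst _ _ _) (fun s m hm => ?_)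
    have hm' : m ≫ ι = s.ι := hm
    rw [← cancel_mono ι] at *
    rw [hm']
    exact (pb.lift_fst _ _ _).symm
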